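/- (Linear channel simulation from a bin index.) Let F be a finite field, 𝒳 = F^ℓ, and let X([n]) be n i.i.d. copies of a uniform random variable on 𝒳, viewed as a vector in F^{nℓ}. Let R < ℓ·log₂|F| and δ > 0, set m = ⌊nR/log₂|F|⌋, and define the linear random binning B = A·X([n]) + V ∈ F^m, where the entries of the matrix A ∈ F^{m×nℓ} and the vector V ∈ F^m are mutually independent and uniform on F. Let T be uniform on F^{d} with d = ⌈n(ℓ·log₂|F| − R + δ)/log₂|F|⌉, independent of everything else. Then there exists η > 0 such that for all sufficiently large n, for each realization of (A, V) there exists an affine linear simulation function φ(T, B) (of the form φ(t, b) = Q(b − V) + N·t for matrices Q, N over F) such that, defining p̃_{X([n])|B}(xⁿ|b) = (1/|F|^d)·∑_t 𝟙[φ(t,b) = xⁿ], one has 𝔼_{A,V} ‖ p_B · p_{X([n])|B} − p_B · p̃_{X([n])|B} ‖₁ ≤ 2^{−ηn}. Moreover, for every n this expected total variation distance is at most the probability that rank(A) < n(R − δ')/log₂|F| for the appropriate δ' = δ. -/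

import Mathlib

open Finset

noncomputable section

/-- Bin-index length `m = ⌊nR / log₂ q⌋` (with `q = |F|`). -/
def mdim (q : ℕ) (R : ℝ) (n : ℕ) : ℕ := ⌊(n : ℝ) * R / Real.logb 2 q⌋₊

/-- Randomness length `d = ⌈n(ℓ·log₂ q − R + δ) / log₂ q⌉` (with `q = |F|`). -/
def ddim (q ℓ : ℕ) (R δ : ℝ) (n : ℕ) : ℕ :=
  ⌈(n : ℝ) * ((ℓ : ℝ) * Real.logb 2 q - R + δ) / Real.logb 2 q⌉₊

/-- Total variation distance between the true joint pmf of `(B, X([n]))`, where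
`X([n])` is uniform on `F^{n×ℓ}` (n i.i.d. uniform copies on `F^ℓ`, flattened) and
`B = A·X([n]) + V`, and the simulated joint pmf `p_B · p̃_{X([n])|B}` obtained from the
affine linear simulator `φ(τ, b) = Q(b − V) + N·τ` with `τ` uniform on `F^d`. -/
def tvSimLin {F : Type} [Field F] [Fintype F] [DecidableEq F] (ℓ : ℕ) (R δ : ℝ)
    (n : ℕ)
    (AV : Matrix (Fin (mdim (Fintype.card F) R n)) (Fin n × Fin ℓ) F ×
      (Fin (mdim (Fintype.card F) R n) → F))
    (QN : Matrix (Fin n × Fin ℓ) (Fin (mdim (Fintype.card F) R n)) F ×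
      Matrix (Fin n × Fin ℓ) (Fin (ddim (Fintype.card F) ℓ R δ n)) F) : ℝ :=
  2⁻¹ * ∑ b : Fin (mdim (Fintype.card F) R n) → F, ∑ x : Fin n × Fin ℓ → F,
    |(if AV.1.mulVec x + AV.2 = b then (Fintype.card (Fin n × Fin ℓ → F) : ℝ)⁻¹ else 0) -
      (((univ.filter (fun y : Fin n × Fin ℓ → F => AV.1.mulVec y + AV.2 = b)).card : ℝ) /
          (Fintype.card (Fin n × Fin ℓ → F) : ℝ)) *
        (((Fintype.card F : ℝ) ^ ddim (Fintype.card F) ℓ R δ n)⁻¹ *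
          ((univ.filter (fun τ : Fin (ddim (Fintype.card F) ℓ R δ n) → F =>
            QN.1.mulVec (b - AV.2) + QN.2.mulVec τ = x)).card : ℝ))|

/-- Expected (over the uniformly random matrix `A` and vector `V`) total variation
distance, when the affine linear simulator `(Q, N)` is chosen as a function of the
realization `(A, V)`. -/
def EtvSimLin {F : Type} [Field F] [Fintype F] [DecidableEq F] (ℓ : ℕ) (R δ : ℝ)
    (n : ℕ)
    (QN : (Matrix (Fin (mdim (Fintype.card F) R n)) (Fin n × Fin ℓ) F ×
        (Fin (mdim (Fintype.card F) R n) → F)) →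
      Matrix (Fin n × Fin ℓ) (Fin (mdim (Fintype.card F) R n)) F ×
        Matrix (Fin n × Fin ℓ) (Fin (ddim (Fintype.card F) ℓ R δ n)) F) : ℝ :=
  (Fintype.card (Matrix (Fin (mdim (Fintype.card F) R n)) (Fin n × Fin ℓ) F ×
      (Fin (mdim (Fintype.card F) R n) → F)) : ℝ)⁻¹ *
    ∑ AV : Matrix (Fin (mdim (Fintype.card F) R n)) (Fin n × Fin ℓ) F ×
        (Fin (mdim (Fintype.card F) R n) → F),
      tvSimLin ℓ R δ n AV (QN AV)

/-! ### Auxiliary counting lemmas -/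

section auxCount

open Module

variable {F : Type} [Field F] [Fintype F] {M N : Type} [AddCommGroup M] [Module F M]
  [AddCommGroup N] [Module F N] [Fintype M] [DecidableEq N]

omit [Fintype F] in
lemma card_fiber_eq_zero_fiber (f : M →ₗ[F] N) {c : N} (hc : c ∈ LinearMap.range f) :
    (univ.filter (fun x => f x = c)).card = (univ.filter (fun x => f x = 0)).card := by
  obtain ⟨x₀, hx₀⟩ := hc
  refine Finset.card_bij' (fun x _ => x - x₀) (fun x _ => x + x₀) ?_ ?_ ?_ ?_
  · intro a ha
    simp only [mem_filter, mem_univ, true_and] at ha ⊢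
    simp [map_sub, ha, hx₀]
  · intro a ha
    simp only [mem_filter, mem_univ, true_and] at ha ⊢
    simp [map_add, ha, hx₀]
  · intro a _; simp
  · intro a _; simp

lemma card_zero_fiber_eq_pow (f : M →ₗ[F] N) :
    (univ.filter (fun x => f x = 0)).card = Fintype.card F ^ finrank F (LinearMap.ker f) := by
  classical
  have h1 : (univ.filter (fun x => f x = 0)).card = Nat.card {x : M // f x = 0} := by
    rw [Nat.card_eq_fintype_card, Fintype.card_subtype]
  have e : {x : M // f x = 0} ≃ LinearMap.ker f :=
    Equiv.subtypeEquivRight (fun x => (LinearMap.mem_ker).symm)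
  rw [h1, Nat.card_congr e]
  have : Fintype (LinearMap.ker f) := Fintype.ofFinite _
  rw [Nat.card_eq_fintype_card]
  exact card_eq_pow_finrank (K := F)

lemma card_fiber_eq_pow (f : M →ₗ[F] N) {c : N} (hc : c ∈ LinearMap.range f) :
    (univ.filter (fun x => f x = c)).card = Fintype.card F ^ finrank F (LinearMap.ker f) := by
  rw [card_fiber_eq_zero_fiber f hc, card_zero_fiber_eq_pow]

omit [Fintype F] in
lemma card_fiber_eq_zero (f : M →ₗ[F] N) {c : N} (hc : c ∉ LinearMap.range f) :
    (univ.filter (fun x => f x = c)).card = 0 := by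
  rw [Finset.card_eq_zero, Finset.filter_eq_empty_iff]
  intro x _ hx
  exact hc ⟨x, hx⟩

end auxCount

lemma mulVec_toMatrix' {F : Type} [CommRing F] {m n : Type} [Fintype m] [Fintype n]
    [DecidableEq m] [DecidableEq n] (f : (n → F) →ₗ[F] (m → F)) (v : n → F) :
    (LinearMap.toMatrix' f).mulVec v = f v := by
  rw [← Matrix.mulVecLin_apply, ← Matrix.toLin'_apply', Matrix.toLin'_toMatrix']

/-- Exact simulation whenever the kernel of the binning map fits in the randomness. -/
lemma tv_eq_zero {F : Type} [Field F] [Fintype F] [DecidableEq F] (ℓ : ℕ) (R δ : ℝ) (n : ℕ)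
    (AV : Matrix (Fin (mdim (Fintype.card F) R n)) (Fin n × Fin ℓ) F ×
      (Fin (mdim (Fintype.card F) R n) → F))
    (hA : Module.finrank F (LinearMap.ker AV.1.mulVecLin) ≤ ddim (Fintype.card F) ℓ R δ n) :
    ∃ QN, tvSimLin ℓ R δ n AV QN = 0 := by
  classical
  open Module in
  obtain ⟨A, V⟩ := AV
  set d := ddim (Fintype.card F) ℓ R δ n with hd
  set f := A.mulVecLin with hf
  set k0 := finrank F (LinearMap.ker f) with hk0
  obtain ⟨g, hg⟩ := f.rangeRestrict.exists_rightInverse_of_surjective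
    (LinearMap.range_rangeRestrict f)
  have hgf : ∀ z : LinearMap.range f, f (g z) = z := by
    intro z
    have h := LinearMap.ext_iff.mp hg z
    simpa using congrArg Subtype.val h
  obtain ⟨U, hU⟩ := Submodule.exists_isCompl (LinearMap.range f)
  set π := (LinearMap.range f).linearProjOfIsCompl U hU with hπ
  set Qlin := g ∘ₗ π with hQlin
  have hQ : ∀ y, (hy : y ∈ LinearMap.range f) → f (Qlin y) = y := by
    intro y hy
    have h1 : π y = ⟨y, hy⟩ := Submodule.linearProjOfIsCompl_apply_left hU ⟨y, hy⟩
    simp only [hQlin, LinearMap.comp_apply, h1]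
    exact hgf ⟨y, hy⟩
  set bk := Module.finBasis F ↥(LinearMap.ker f) with hbk
  set N1 : (Fin d → F) →ₗ[F] ↥(LinearMap.ker f) :=
    (bk.equivFun.symm : (Fin k0 → F) →ₗ[F] ↥(LinearMap.ker f)) ∘ₗ
      LinearMap.funLeft F F (Fin.castLE hA) with hN1
  have hN1surj : Function.Surjective N1 := by
    rw [hN1, LinearMap.coe_comp]
    exact (bk.equivFun.symm.surjective).comp
      (LinearMap.funLeft_surjective_of_injective F F (Fin.castLE hA) (Fin.castLE_injective hA))
  set Nlin := (LinearMap.ker f).subtype ∘ₗ N1 with hNlin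
  have hNrange : LinearMap.range Nlin = LinearMap.ker f := by
    rw [hNlin, LinearMap.range_comp_of_range_eq_top _ (LinearMap.range_eq_top.mpr hN1surj),
      Submodule.range_subtype]
  have hNker : finrank F (LinearMap.ker Nlin) = d - k0 := by
    have hrn := LinearMap.finrank_range_add_finrank_ker Nlin
    rw [hNrange, finrank_fin_fun] at hrn
    omega
  refine ⟨(LinearMap.toMatrix' Qlin, LinearMap.toMatrix' Nlin), ?_⟩
  rw [tvSimLin]
  rw [mul_eq_zero]; right
  apply Finset.sum_eq_zero; intro b _
  apply Finset.sum_eq_zero; intro x _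
  rw [abs_eq_zero]
  have hfy : ∀ y, A.mulVec y = f y := fun y => rfl
  have hfilterb : (univ.filter (fun y : Fin n × Fin ℓ → F => A.mulVec y + V = b)) =
      univ.filter (fun y => f y = b - V) := by
    apply Finset.filter_congr; intro y _
    rw [hfy, eq_sub_iff_add_eq]
  have hfilterτ : (univ.filter (fun τ : Fin d → F =>
      (LinearMap.toMatrix' Qlin).mulVec (b - V) + (LinearMap.toMatrix' Nlin).mulVec τ = x)) =
      univ.filter (fun τ => Nlin τ = x - Qlin (b - V)) := by
    apply Finset.filter_congr; intro τ _
    rw [mulVec_toMatrix', mulVec_toMatrix', add_comm, ← eq_sub_iff_add_eq]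
  simp only [hfilterb, hfilterτ]
  rw [hfilterτ]
  by_cases hbc : b - V ∈ LinearMap.range f
  · by_cases hx : f x = b - V
    · rw [if_pos (show A.mulVec x + V = b by rw [hfy, ← eq_sub_iff_add_eq]; exact hx)]
      rw [card_fiber_eq_pow f hbc]
      have hxQ : x - Qlin (b - V) ∈ LinearMap.range Nlin := by
        rw [hNrange, LinearMap.mem_ker, map_sub, hx, hQ _ hbc, sub_self]
      rw [card_fiber_eq_pow Nlin hxQ, hNker]
      have hq1 : (1:ℝ) ≤ (Fintype.card F : ℝ) := by
        exact_mod_cast Nat.one_le_iff_ne_zero.mpr Fintype.card_ne_zero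
      have hq0 : (0:ℝ) < (Fintype.card F : ℝ) := lt_of_lt_of_le one_pos hq1
      have hC0 : (0:ℝ) < (Fintype.card (Fin n × Fin ℓ → F) : ℝ) := by
        exact_mod_cast Fintype.card_pos
      have hpow : (Fintype.card F : ℝ) ^ k0 * (Fintype.card F : ℝ) ^ (d - k0) =
          (Fintype.card F : ℝ) ^ d := by
        rw [← pow_add, Nat.add_sub_cancel' hA]
      push_cast
      rw [sub_eq_zero]
      field_simp
      rw [← hpow]
    · rw [if_neg (show ¬(A.mulVec x + V = b) by rw [hfy, ← eq_sub_iff_add_eq]; exact hx)]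
      have hxQ : x - Qlin (b - V) ∉ LinearMap.range Nlin := by
        rw [hNrange, LinearMap.mem_ker, map_sub, hQ _ hbc, sub_eq_zero]
        exact hx
      rw [card_fiber_eq_zero Nlin hxQ]
      simp
  · rw [if_neg (show ¬(A.mulVec x + V = b) by
      rw [hfy, ← eq_sub_iff_add_eq]; intro h; exact hbc ⟨x, h⟩)]
    rw [card_fiber_eq_zero f hbc]
    simp

set_option maxHeartbeats 1000000 in
lemma tv_le_one {F : Type} [Field F] [Fintype F] [DecidableEq F] (ℓ : ℕ) (R δ : ℝ) (n : ℕ)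
    (AV : Matrix (Fin (mdim (Fintype.card F) R n)) (Fin n × Fin ℓ) F ×
      (Fin (mdim (Fintype.card F) R n) → F))
    (QN : Matrix (Fin n × Fin ℓ) (Fin (mdim (Fintype.card F) R n)) F ×
      Matrix (Fin n × Fin ℓ) (Fin (ddim (Fintype.card F) ℓ R δ n)) F) :
    tvSimLin ℓ R δ n AV QN ≤ 1 := by
  classical
  have hC0 : (0:ℝ) < (Fintype.card (Fin n × Fin ℓ → F) : ℝ) := by
    exact_mod_cast Fintype.card_pos
  have hq0 : (0:ℝ) < (Fintype.card F : ℝ) := by exact_mod_cast Fintype.card_pos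
  have hP : ∑ b : Fin (mdim (Fintype.card F) R n) → F, ∑ x : Fin n × Fin ℓ → F,
      (if AV.1.mulVec x + AV.2 = b then (Fintype.card (Fin n × Fin ℓ → F) : ℝ)⁻¹ else 0)
      = 1 := by
    rw [Finset.sum_comm]
    have h1 : ∀ x : Fin n × Fin ℓ → F, ∑ b : Fin (mdim (Fintype.card F) R n) → F,
        (if AV.1.mulVec x + AV.2 = b then (Fintype.card (Fin n × Fin ℓ → F) : ℝ)⁻¹ else 0)
        = (Fintype.card (Fin n × Fin ℓ → F) : ℝ)⁻¹ := by
      intro x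
      rw [Finset.sum_ite_eq univ (AV.1.mulVec x + AV.2)
        (fun _ => (Fintype.card (Fin n × Fin ℓ → F) : ℝ)⁻¹)]
      simp
    rw [Finset.sum_congr rfl (fun x _ => h1 x), Finset.sum_const, Finset.card_univ,
      nsmul_eq_mul, mul_inv_cancel₀ hC0.ne']
  have hτ : ∀ b : Fin (mdim (Fintype.card F) R n) → F, ∑ x : Fin n × Fin ℓ → F,
      ((univ.filter (fun τ : Fin (ddim (Fintype.card F) ℓ R δ n) → F =>
        QN.1.mulVec (b - AV.2) + QN.2.mulVec τ = x)).card : ℝ)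
      = (Fintype.card F : ℝ) ^ ddim (Fintype.card F) ℓ R δ n := by
    intro b
    rw [← Nat.cast_sum, ← Finset.card_eq_sum_card_fiberwise
      (f := fun τ : Fin (ddim (Fintype.card F) ℓ R δ n) → F =>
        QN.1.mulVec (b - AV.2) + QN.2.mulVec τ)
      (fun τ _ => mem_univ _), Finset.card_univ]
    simp
  have hy : ∑ b : Fin (mdim (Fintype.card F) R n) → F,
      ((univ.filter (fun y : Fin n × Fin ℓ → F => AV.1.mulVec y + AV.2 = b)).card : ℝ)
      = (Fintype.card (Fin n × Fin ℓ → F) : ℝ) := by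
    rw [← Nat.cast_sum, ← Finset.card_eq_sum_card_fiberwise
      (f := fun y : Fin n × Fin ℓ → F => AV.1.mulVec y + AV.2)
      (fun y _ => mem_univ _), Finset.card_univ]
  have hS : ∑ b : Fin (mdim (Fintype.card F) R n) → F, ∑ x : Fin n × Fin ℓ → F,
      (((univ.filter (fun y : Fin n × Fin ℓ → F => AV.1.mulVec y + AV.2 = b)).card : ℝ) /
          (Fintype.card (Fin n × Fin ℓ → F) : ℝ)) *
        (((Fintype.card F : ℝ) ^ ddim (Fintype.card F) ℓ R δ n)⁻¹ *
          ((univ.filter (fun τ : Fin (ddim (Fintype.card F) ℓ R δ n) → F =>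
            QN.1.mulVec (b - AV.2) + QN.2.mulVec τ = x)).card : ℝ)) = 1 := by
    have h1 : ∀ b : Fin (mdim (Fintype.card F) R n) → F, ∑ x : Fin n × Fin ℓ → F,
        (((univ.filter (fun y : Fin n × Fin ℓ → F => AV.1.mulVec y + AV.2 = b)).card : ℝ) /
          (Fintype.card (Fin n × Fin ℓ → F) : ℝ)) *
        (((Fintype.card F : ℝ) ^ ddim (Fintype.card F) ℓ R δ n)⁻¹ *
          ((univ.filter (fun τ : Fin (ddim (Fintype.card F) ℓ R δ n) → F =>
            QN.1.mulVec (b - AV.2) + QN.2.mulVec τ = x)).card : ℝ)) =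
        ((univ.filter (fun y : Fin n × Fin ℓ → F => AV.1.mulVec y + AV.2 = b)).card : ℝ) /
          (Fintype.card (Fin n × Fin ℓ → F) : ℝ) := by
      intro b
      rw [← Finset.mul_sum, ← Finset.mul_sum, hτ b, inv_mul_cancel₀ (by positivity), mul_one]
    rw [Finset.sum_congr rfl (fun b _ => h1 b), ← Finset.sum_div, hy, div_self hC0.ne']
  rw [tvSimLin]
  have hbound : ∑ b : Fin (mdim (Fintype.card F) R n) → F, ∑ x : Fin n × Fin ℓ → F,
      |(if AV.1.mulVec x + AV.2 = b then (Fintype.card (Fin n × Fin ℓ → F) : ℝ)⁻¹ else 0) -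
        (((univ.filter (fun y : Fin n × Fin ℓ → F => AV.1.mulVec y + AV.2 = b)).card : ℝ) /
            (Fintype.card (Fin n × Fin ℓ → F) : ℝ)) *
          (((Fintype.card F : ℝ) ^ ddim (Fintype.card F) ℓ R δ n)⁻¹ *
            ((univ.filter (fun τ : Fin (ddim (Fintype.card F) ℓ R δ n) → F =>
              QN.1.mulVec (b - AV.2) + QN.2.mulVec τ = x)).card : ℝ))| ≤ 2 := by
    have h2 : ∀ (b : Fin (mdim (Fintype.card F) R n) → F) (x : Fin n × Fin ℓ → F),
        |(if AV.1.mulVec x + AV.2 = b then (Fintype.card (Fin n × Fin ℓ → F) : ℝ)⁻¹ else 0) -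
          (((univ.filter (fun y : Fin n × Fin ℓ → F => AV.1.mulVec y + AV.2 = b)).card : ℝ) /
              (Fintype.card (Fin n × Fin ℓ → F) : ℝ)) *
            (((Fintype.card F : ℝ) ^ ddim (Fintype.card F) ℓ R δ n)⁻¹ *
              ((univ.filter (fun τ : Fin (ddim (Fintype.card F) ℓ R δ n) → F =>
                QN.1.mulVec (b - AV.2) + QN.2.mulVec τ = x)).card : ℝ))| ≤
        (if AV.1.mulVec x + AV.2 = b then (Fintype.card (Fin n × Fin ℓ → F) : ℝ)⁻¹ else 0) +
          (((univ.filter (fun y : Fin n × Fin ℓ → F => AV.1.mulVec y + AV.2 = b)).card : ℝ) /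
              (Fintype.card (Fin n × Fin ℓ → F) : ℝ)) *
            (((Fintype.card F : ℝ) ^ ddim (Fintype.card F) ℓ R δ n)⁻¹ *
              ((univ.filter (fun τ : Fin (ddim (Fintype.card F) ℓ R δ n) → F =>
                QN.1.mulVec (b - AV.2) + QN.2.mulVec τ = x)).card : ℝ)) := by
      intro b x
      have ha : (0:ℝ) ≤ (if AV.1.mulVec x + AV.2 = b then
          (Fintype.card (Fin n × Fin ℓ → F) : ℝ)⁻¹ else 0) := by split <;> positivity
      have hb : (0:ℝ) ≤ (((univ.filter (fun y : Fin n × Fin ℓ → F =>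
          AV.1.mulVec y + AV.2 = b)).card : ℝ) / (Fintype.card (Fin n × Fin ℓ → F) : ℝ)) *
            (((Fintype.card F : ℝ) ^ ddim (Fintype.card F) ℓ R δ n)⁻¹ *
              ((univ.filter (fun τ : Fin (ddim (Fintype.card F) ℓ R δ n) → F =>
                QN.1.mulVec (b - AV.2) + QN.2.mulVec τ = x)).card : ℝ)) := by positivity
      calc |_ - _| ≤ |_| + |_| := abs_sub _ _
        _ = _ + _ := by rw [abs_of_nonneg ha, abs_of_nonneg hb]
    calc ∑ b : Fin (mdim (Fintype.card F) R n) → F, ∑ x : Fin n × Fin ℓ → F, _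
        ≤ ∑ b : Fin (mdim (Fintype.card F) R n) → F, ∑ x : Fin n × Fin ℓ → F,
          ((if AV.1.mulVec x + AV.2 = b then (Fintype.card (Fin n × Fin ℓ → F) : ℝ)⁻¹ else 0) +
          (((univ.filter (fun y : Fin n × Fin ℓ → F => AV.1.mulVec y + AV.2 = b)).card : ℝ) /
              (Fintype.card (Fin n × Fin ℓ → F) : ℝ)) *
            (((Fintype.card F : ℝ) ^ ddim (Fintype.card F) ℓ R δ n)⁻¹ *
              ((univ.filter (fun τ : Fin (ddim (Fintype.card F) ℓ R δ n) → F =>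
                QN.1.mulVec (b - AV.2) + QN.2.mulVec τ = x)).card : ℝ))) :=
          Finset.sum_le_sum (fun b _ => Finset.sum_le_sum (fun x _ => h2 b x))
      _ = 2 := by
          simp only [Finset.sum_add_distrib, hP, hS]
          norm_num
  linarith [hbound]


open Module Matrix in
lemma count_low_rank {F : Type} [Field F] [Fintype F] [DecidableEq F]
    (m : ℕ) (ι : Type) [Fintype ι] [DecidableEq ι] (k : ℕ) (hk : k ≤ m)
    (hkι : k ≤ Fintype.card ι) :
    (univ.filter (fun A : Matrix (Fin m) ι F => A.rank < k)).card *
      (Fintype.card F) ^ (Fintype.card ι - k) ≤ (Fintype.card F) ^ (m * Fintype.card ι) := by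
  classical
  set q := Fintype.card F with hq
  have hq2 : 2 ≤ q := Fintype.one_lt_card
  have hq0 : 0 < q := by omega
  rcases Nat.eq_zero_or_pos k with hk0 | hk0
  · have : (univ.filter (fun A : Matrix (Fin m) ι F => A.rank < k)) = ∅ := by
      apply Finset.filter_eq_empty_iff.mpr
      intro A _
      omega
    rw [this]
    simp
  have hm : 1 ≤ m := le_trans hk0 hk
  set cι := Fintype.card ι with hcι
  -- Step A : each bad matrix has many nonzero left-kernel vectors
  have stepA : ∀ A : Matrix (Fin m) ι F, A.rank < k →
      q ^ (m - k) ≤ (univ.filter (fun c : Fin m → F => Aᵀ.mulVec c = 0 ∧ c ≠ 0)).card := by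
    intro A hA
    have h1 : (univ.filter (fun c : Fin m → F => Aᵀ.mulVec c = 0 ∧ c ≠ 0)) =
        (univ.filter (fun c : Fin m → F => Aᵀ.mulVec c = 0)).erase 0 := by
      ext c
      simp only [Finset.mem_erase, mem_filter, mem_univ, true_and]
      tauto
    have h0mem : (0 : Fin m → F) ∈ univ.filter (fun c : Fin m → F => Aᵀ.mulVec c = 0) := by
      simp [Matrix.mulVec_zero]
    have h2 : (univ.filter (fun c : Fin m → F => Aᵀ.mulVec c = 0)).card =
        q ^ finrank F (LinearMap.ker Aᵀ.mulVecLin) := by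
      exact card_zero_fiber_eq_pow (Aᵀ.mulVecLin)
    have h3 : m - k + 1 ≤ finrank F (LinearMap.ker Aᵀ.mulVecLin) := by
      have hrn := LinearMap.finrank_range_add_finrank_ker Aᵀ.mulVecLin
      rw [finrank_pi] at hrn
      simp only [Fintype.card_fin] at hrn
      have hrk : finrank F (LinearMap.range Aᵀ.mulVecLin) = A.rank := by
        rw [← Matrix.rank_transpose A]
        rfl
      rw [hrk] at hrn
      have : A.rank ≤ m := by omega
      omega
    rw [h1, Finset.card_erase_of_mem h0mem, h2]
    have h4 : q ^ (m - k + 1) ≤ q ^ finrank F (LinearMap.ker Aᵀ.mulVecLin) :=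
      Nat.pow_le_pow_right (by omega) h3
    have h5 : q ^ (m - k) + 1 ≤ q ^ (m - k + 1) := by
      rw [pow_succ]
      have : 1 ≤ q ^ (m - k) := Nat.one_le_pow _ _ hq0
      nlinarith
    omega
  -- Step C : counting matrices annihilated by a fixed nonzero vector
  have stepC : ∀ c : Fin m → F, c ≠ 0 →
      (univ.filter (fun A : Matrix (Fin m) ι F => Aᵀ.mulVec c = 0)).card =
        q ^ (m * cι - cι) := by
    intro c hc
    have : ∃ i0, c i0 ≠ 0 := by
      by_contra h
      push_neg at h
      exact hc (funext h)
    obtain ⟨i0, hi0⟩ := this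
    set Φ : Matrix (Fin m) ι F →ₗ[F] (ι → F) :=
      { toFun := fun A => Aᵀ.mulVec c
        map_add' := by
          intro A B
          rw [Matrix.transpose_add, Matrix.add_mulVec]
        map_smul' := by
          intro a A
          rw [Matrix.transpose_smul, Matrix.smul_mulVec]
          rfl } with hΦ
    have hsurj : Function.Surjective Φ := by
      intro v
      refine ⟨fun i j => if i = i0 then (c i0)⁻¹ * v j else 0, ?_⟩
      ext j
      simp only [hΦ, LinearMap.coe_mk, AddHom.coe_mk, Matrix.mulVec, Matrix.transpose_apply,
        dotProduct]
      rw [Finset.sum_eq_single i0]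
      · show (if i0 = i0 then (c i0)⁻¹ * v j else 0) * c i0 = v j
        rw [if_pos rfl, mul_comm, ← mul_assoc, mul_inv_cancel₀ hi0, one_mul]
      · intro i _ hi
        show (if i = i0 then (c i0)⁻¹ * v j else 0) * c i = 0
        simp [hi]
      · intro h
        exact absurd (mem_univ i0) h
    have hcard : (univ.filter (fun A : Matrix (Fin m) ι F => Aᵀ.mulVec c = 0)).card =
        q ^ finrank F (LinearMap.ker Φ) := card_zero_fiber_eq_pow Φ
    have hker : finrank F (LinearMap.ker Φ) = m * cι - cι := by
      have hrn := LinearMap.finrank_range_add_finrank_ker Φ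
      have hrange : LinearMap.range Φ = ⊤ := LinearMap.range_eq_top.mpr hsurj
      rw [hrange, finrank_top, finrank_pi, finrank_matrix] at hrn
      simp only [Fintype.card_fin, finrank_self, mul_one] at hrn
      rw [← hcι] at hrn
      omega
    rw [hcard, hker]
  -- Step B : double counting
  have stepB : (univ.filter (fun A : Matrix (Fin m) ι F => A.rank < k)).card * q ^ (m - k) ≤
      q ^ m * q ^ (m * cι - cι) := by
    calc (univ.filter (fun A : Matrix (Fin m) ι F => A.rank < k)).card * q ^ (m - k)
        = ∑ _A ∈ univ.filter (fun A : Matrix (Fin m) ι F => A.rank < k), q ^ (m - k) := by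
          rw [Finset.sum_const, smul_eq_mul]
      _ ≤ ∑ A ∈ univ.filter (fun A : Matrix (Fin m) ι F => A.rank < k),
            (univ.filter (fun c : Fin m → F => Aᵀ.mulVec c = 0 ∧ c ≠ 0)).card := by
          apply Finset.sum_le_sum
          intro A hA
          simp only [mem_filter, mem_univ, true_and] at hA
          exact stepA A hA
      _ ≤ ∑ A : Matrix (Fin m) ι F,
            (univ.filter (fun c : Fin m → F => Aᵀ.mulVec c = 0 ∧ c ≠ 0)).card :=
          Finset.sum_le_sum_of_subset (Finset.filter_subset _ _)
      _ = ∑ A : Matrix (Fin m) ι F, ∑ c ∈ univ.filter (fun c : Fin m → F => c ≠ 0),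
            (if Aᵀ.mulVec c = 0 then 1 else 0) := by
          apply Finset.sum_congr rfl
          intro A _
          rw [Finset.card_filter, Finset.sum_filter]
          apply Finset.sum_congr rfl
          intro c _
          by_cases h1 : c ≠ 0 <;> by_cases h2 : Aᵀ.mulVec c = 0 <;> simp [h1, h2]
      _ = ∑ c ∈ univ.filter (fun c : Fin m → F => c ≠ 0), ∑ A : Matrix (Fin m) ι F,
            (if Aᵀ.mulVec c = 0 then 1 else 0) := Finset.sum_comm
      _ = ∑ c ∈ univ.filter (fun c : Fin m → F => c ≠ 0), q ^ (m * cι - cι) := by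
          apply Finset.sum_congr rfl
          intro c hc
          simp only [mem_filter, mem_univ, true_and] at hc
          rw [← Finset.card_filter]
          exact stepC c hc
      _ ≤ q ^ m * q ^ (m * cι - cι) := by
          rw [Finset.sum_const, smul_eq_mul]
          apply Nat.mul_le_mul_right
          calc (univ.filter (fun c : Fin m → F => c ≠ 0)).card ≤ (univ : Finset (Fin m → F)).card :=
            Finset.card_filter_le _ _
          _ = q ^ m := by rw [Finset.card_univ]; simp [hq]
  -- conclude
  have hcc : cι ≤ m * cι := Nat.le_mul_of_pos_left cι hm
  have key : (univ.filter (fun A : Matrix (Fin m) ι F => A.rank < k)).card *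
      q ^ (cι - k) * q ^ m ≤ q ^ (m * cι) * q ^ m := by
    calc (univ.filter (fun A : Matrix (Fin m) ι F => A.rank < k)).card * q ^ (cι - k) * q ^ m
        = (univ.filter (fun A : Matrix (Fin m) ι F => A.rank < k)).card *
            (q ^ (m - k) * q ^ cι) := by
          rw [mul_assoc, ← pow_add, ← pow_add]
          congr 2
          omega
      _ = ((univ.filter (fun A : Matrix (Fin m) ι F => A.rank < k)).card * q ^ (m - k)) *
            q ^ cι := by ring
      _ ≤ (q ^ m * q ^ (m * cι - cι)) * q ^ cι := Nat.mul_le_mul_right _ stepB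
      _ = q ^ (m * cι) * q ^ m := by
          rw [← pow_add, ← pow_add, ← pow_add]
          congr 1
          omega
  exact Nat.le_of_mul_le_mul_right key (pow_pos hq0 m)

/-- **Linear channel simulation from a bin index.** For `X([n])` uniform
on `F^{n×ℓ}`, the affine linear binning `B = A·X([n]) + V` at rate `R < ℓ·log₂|F|`, and
any `δ > 0`: there is `η > 0` so that for all large `n`, affine linear simulators
`φ(τ,b) = Q(b−V) + N·τ` (chosen per realization of `(A,V)`) achieve expected total
variation distance at most `2^{−ηn}`; moreover for every `n` the expected total
variation distance is at most `P(rank(A) < n(R−δ)/log₂|F|)`. -/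
theorem linear_channel_simulation {F : Type} [Field F] [Fintype F] [DecidableEq F]
    (ℓ : ℕ) (R δ : ℝ) (hR : R < (ℓ : ℝ) * Real.logb 2 (Fintype.card F)) (hδ : 0 < δ) :
    (∃ η : ℝ, 0 < η ∧ ∃ N : ℕ, ∀ n ≥ N,
      ∃ QN, EtvSimLin (F := F) ℓ R δ n QN ≤ (2 : ℝ) ^ (-(η * (n : ℝ)))) ∧
    (∀ n : ℕ, ∃ QN, EtvSimLin (F := F) ℓ R δ n QN ≤
      (Nat.card {AV : Matrix (Fin (mdim (Fintype.card F) R n)) (Fin n × Fin ℓ) F ×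
          (Fin (mdim (Fintype.card F) R n) → F) //
          (AV.1.rank : ℝ) < (n : ℝ) * (R - δ) / Real.logb 2 (Fintype.card F)} : ℝ) /
        (Fintype.card (Matrix (Fin (mdim (Fintype.card F) R n)) (Fin n × Fin ℓ) F ×
          (Fin (mdim (Fintype.card F) R n) → F)) : ℝ)) := by
  classical
  have hq2 : 2 ≤ Fintype.card F := Fintype.one_lt_card
  have hq2R : (2:ℝ) ≤ (Fintype.card F : ℝ) := by exact_mod_cast hq2
  have hqpos : (0:ℝ) < (Fintype.card F : ℝ) := by linarith
  have hL1 : (1:ℝ) ≤ Real.logb 2 (Fintype.card F) := by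
    have h := Real.logb_le_logb_of_le (b := 2) (by norm_num) (by norm_num) hq2R
    rwa [Real.logb_self_eq_one (by norm_num)] at h
  have hL0 : (0:ℝ) < Real.logb 2 (Fintype.card F) := by linarith
  -- the ceiling is at least the real quantity
  have hu : ∀ n : ℕ, (n : ℝ) * ((ℓ : ℝ) * Real.logb 2 (Fintype.card F) - R + δ) /
      Real.logb 2 (Fintype.card F) ≤ (ddim (Fintype.card F) ℓ R δ n : ℝ) := by
    intro n
    exact Nat.le_ceil _
  have hurw : ∀ n : ℕ, (n : ℝ) * ((ℓ : ℝ) * Real.logb 2 (Fintype.card F) - R + δ) /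
      Real.logb 2 (Fintype.card F) =
      (n : ℝ) * ℓ - (n : ℝ) * (R - δ) / Real.logb 2 (Fintype.card F) := by
    intro n
    field_simp
    ring
  -- choice of a good simulator for each (A, V)
  have hQNex : ∀ n : ℕ, ∃ QNf : (Matrix (Fin (mdim (Fintype.card F) R n)) (Fin n × Fin ℓ) F ×
      (Fin (mdim (Fintype.card F) R n) → F)) →
      Matrix (Fin n × Fin ℓ) (Fin (mdim (Fintype.card F) R n)) F ×
        Matrix (Fin n × Fin ℓ) (Fin (ddim (Fintype.card F) ℓ R δ n)) F,
      ∀ AV, Module.finrank F (LinearMap.ker AV.1.mulVecLin) ≤ ddim (Fintype.card F) ℓ R δ n →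
        tvSimLin ℓ R δ n AV (QNf AV) = 0 := by
    intro n
    refine ⟨fun AV => if h : Module.finrank F (LinearMap.ker AV.1.mulVecLin) ≤
        ddim (Fintype.card F) ℓ R δ n then (tv_eq_zero ℓ R δ n AV h).choose else (0, 0), ?_⟩
    intro AV h
    dsimp only
    rw [dif_pos h]
    exact (tv_eq_zero ℓ R δ n AV h).choose_spec
  -- generic bound on the expected TV distance by the probability of a bad event
  have hE : ∀ (n : ℕ)
      (QNf : (Matrix (Fin (mdim (Fintype.card F) R n)) (Fin n × Fin ℓ) F ×
          (Fin (mdim (Fintype.card F) R n) → F)) →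
        Matrix (Fin n × Fin ℓ) (Fin (mdim (Fintype.card F) R n)) F ×
          Matrix (Fin n × Fin ℓ) (Fin (ddim (Fintype.card F) ℓ R δ n)) F)
      (P : (Matrix (Fin (mdim (Fintype.card F) R n)) (Fin n × Fin ℓ) F ×
          (Fin (mdim (Fintype.card F) R n) → F)) → Prop) [DecidablePred P],
      (∀ AV, ddim (Fintype.card F) ℓ R δ n < Module.finrank F (LinearMap.ker AV.1.mulVecLin) →
        P AV) →
      (∀ AV, Module.finrank F (LinearMap.ker AV.1.mulVecLin) ≤ ddim (Fintype.card F) ℓ R δ n →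
        tvSimLin ℓ R δ n AV (QNf AV) = 0) →
      EtvSimLin (F := F) ℓ R δ n QNf ≤ ((univ.filter P).card : ℝ) /
        (Fintype.card (Matrix (Fin (mdim (Fintype.card F) R n)) (Fin n × Fin ℓ) F ×
          (Fin (mdim (Fintype.card F) R n) → F)) : ℝ) := by
    intro n QNf P instP hP h0
    rw [EtvSimLin, div_eq_inv_mul]
    have hT0 : (0:ℝ) ≤ (Fintype.card (Matrix (Fin (mdim (Fintype.card F) R n))
        (Fin n × Fin ℓ) F × (Fin (mdim (Fintype.card F) R n) → F)) : ℝ)⁻¹ := by positivity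
    apply mul_le_mul_of_nonneg_left _ hT0
    calc ∑ AV : Matrix (Fin (mdim (Fintype.card F) R n)) (Fin n × Fin ℓ) F ×
        (Fin (mdim (Fintype.card F) R n) → F), tvSimLin ℓ R δ n AV (QNf AV)
        ≤ ∑ AV : Matrix (Fin (mdim (Fintype.card F) R n)) (Fin n × Fin ℓ) F ×
            (Fin (mdim (Fintype.card F) R n) → F), (if P AV then (1:ℝ) else 0) := by
          apply Finset.sum_le_sum
          intro AV _
          by_cases hp : P AV
          · rw [if_pos hp]
            exact tv_le_one ℓ R δ n AV _
          · rw [if_neg hp]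
            have hgood : Module.finrank F (LinearMap.ker AV.1.mulVecLin) ≤
                ddim (Fintype.card F) ℓ R δ n := by
              by_contra hcon
              push_neg at hcon
              exact hp (hP AV hcon)
            rw [h0 AV hgood]
      _ = ((univ.filter P).card : ℝ) := by rw [Finset.sum_boole]
  -- rank-nullity for the binning matrix
  have hrk : ∀ (n : ℕ) (AV : Matrix (Fin (mdim (Fintype.card F) R n)) (Fin n × Fin ℓ) F ×
      (Fin (mdim (Fintype.card F) R n) → F)),
      AV.1.rank + Module.finrank F (LinearMap.ker AV.1.mulVecLin) = n * ℓ := by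
    intro n AV
    have h := LinearMap.finrank_range_add_finrank_ker AV.1.mulVecLin
    rw [Module.finrank_pi] at h
    simpa [Fintype.card_prod, Matrix.rank] using h
  -- Part 2
  have part2 : ∀ n : ℕ, ∃ QN, EtvSimLin (F := F) ℓ R δ n QN ≤
      (Nat.card {AV : Matrix (Fin (mdim (Fintype.card F) R n)) (Fin n × Fin ℓ) F ×
          (Fin (mdim (Fintype.card F) R n) → F) //
          (AV.1.rank : ℝ) < (n : ℝ) * (R - δ) / Real.logb 2 (Fintype.card F)} : ℝ) /
        (Fintype.card (Matrix (Fin (mdim (Fintype.card F) R n)) (Fin n × Fin ℓ) F ×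
          (Fin (mdim (Fintype.card F) R n) → F)) : ℝ) := by
    intro n
    obtain ⟨QNf, h0⟩ := hQNex n
    refine ⟨QNf, ?_⟩
    have hP : ∀ AV : Matrix (Fin (mdim (Fintype.card F) R n)) (Fin n × Fin ℓ) F ×
        (Fin (mdim (Fintype.card F) R n) → F),
        ddim (Fintype.card F) ℓ R δ n < Module.finrank F (LinearMap.ker AV.1.mulVecLin) →
        (AV.1.rank : ℝ) < (n : ℝ) * (R - δ) / Real.logb 2 (Fintype.card F) := by
      intro AV hcon
      have h1 := hrk n AV
      have h2 : AV.1.rank + ddim (Fintype.card F) ℓ R δ n < n * ℓ := by omega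
      have h3 : (AV.1.rank : ℝ) < (n : ℝ) * ℓ - (ddim (Fintype.card F) ℓ R δ n : ℝ) := by
        have : ((AV.1.rank : ℕ) : ℝ) + (ddim (Fintype.card F) ℓ R δ n : ℝ) + 1 ≤
            ((n * ℓ : ℕ) : ℝ) := by exact_mod_cast h2
        push_cast at this ⊢
        linarith
      have h4 := hu n
      rw [hurw n] at h4
      linarith
    refine le_trans (hE n QNf _ hP h0) (le_of_eq ?_)
    congr 1
    rw [Nat.card_eq_fintype_card, Fintype.card_subtype]
  refine ⟨⟨δ, hδ, 0, ?_⟩, part2⟩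
  intro n _
  obtain ⟨QNf, h0⟩ := hQNex n
  refine ⟨QNf, ?_⟩
  have hB0 : (0:ℝ) < (2 : ℝ) ^ (-(δ * (n : ℝ))) := Real.rpow_pos_of_pos (by norm_num) _
  by_cases hdc : ddim (Fintype.card F) ℓ R δ n ≤ n * ℓ
  · -- main case
    have hcι : Fintype.card (Fin n × Fin ℓ) = n * ℓ := by simp
    have hP : ∀ AV : Matrix (Fin (mdim (Fintype.card F) R n)) (Fin n × Fin ℓ) F ×
        (Fin (mdim (Fintype.card F) R n) → F),
        ddim (Fintype.card F) ℓ R δ n < Module.finrank F (LinearMap.ker AV.1.mulVecLin) →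
        AV.1.rank < n * ℓ - ddim (Fintype.card F) ℓ R δ n := by
      intro AV hcon
      have h1 := hrk n AV
      omega
    refine le_trans (hE n QNf _ hP h0) ?_
    -- k ≤ m'
    have hXY : (n:ℝ) * (R - δ) / Real.logb 2 (Fintype.card F) ≤
        (n:ℝ) * R / Real.logb 2 (Fintype.card F) := by
      apply (div_le_div_iff_of_pos_right hL0).mpr
      have hn0 : (0:ℝ) ≤ (n:ℝ) * δ := by positivity
      nlinarith
    have hfloor : (n:ℝ) * R / Real.logb 2 (Fintype.card F) <
        (mdim (Fintype.card F) R n : ℝ) + 1 := Nat.lt_floor_add_one _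
    have h6 : (n:ℝ) * ℓ ≤ (ddim (Fintype.card F) ℓ R δ n : ℝ) +
        (n:ℝ) * (R - δ) / Real.logb 2 (Fintype.card F) := by
      have h4 := hu n
      rw [hurw n] at h4
      linarith
    have hkm : n * ℓ - ddim (Fintype.card F) ℓ R δ n ≤ mdim (Fintype.card F) R n := by
      have h7 : ((n * ℓ : ℕ) : ℝ) < (ddim (Fintype.card F) ℓ R δ n : ℝ) +
          ((mdim (Fintype.card F) R n : ℝ) + 1) := by
        push_cast
        linarith
      have h8 : n * ℓ < ddim (Fintype.card F) ℓ R δ n + (mdim (Fintype.card F) R n + 1) := by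
        exact_mod_cast h7
      omega
    have hcount := count_low_rank (F := F) (mdim (Fintype.card F) R n) (Fin n × Fin ℓ)
      (n * ℓ - ddim (Fintype.card F) ℓ R δ n) hkm (by omega)
    rw [show Fintype.card (Fin n × Fin ℓ) - (n * ℓ - ddim (Fintype.card F) ℓ R δ n) =
      ddim (Fintype.card F) ℓ R δ n by omega] at hcount
    rw [hcι] at hcount
    -- cardinality of the matrix space
    have hcardM : Fintype.card (Matrix (Fin (mdim (Fintype.card F) R n)) (Fin n × Fin ℓ) F) =
        Fintype.card F ^ (mdim (Fintype.card F) R n * (n * ℓ)) := by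
      have h9 : Fintype.card (Matrix (Fin (mdim (Fintype.card F) R n)) (Fin n × Fin ℓ) F) =
          Fintype.card (Fin (mdim (Fintype.card F) R n) → Fin n × Fin ℓ → F) := rfl
      rw [h9, Fintype.card_fun, Fintype.card_fun, Fintype.card_prod, Fintype.card_fin,
        Fintype.card_fin, Fintype.card_fin, ← pow_mul, Nat.mul_comm]
    -- cardinality of the filtered pair set
    have hpair : (univ.filter (fun AV : Matrix (Fin (mdim (Fintype.card F) R n))
          (Fin n × Fin ℓ) F × (Fin (mdim (Fintype.card F) R n) → F) =>
          AV.1.rank < n * ℓ - ddim (Fintype.card F) ℓ R δ n)).card =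
        (univ.filter (fun A : Matrix (Fin (mdim (Fintype.card F) R n)) (Fin n × Fin ℓ) F =>
          A.rank < n * ℓ - ddim (Fintype.card F) ℓ R δ n)).card *
        Fintype.card (Fin (mdim (Fintype.card F) R n) → F) := by
      calc (univ.filter (fun AV : Matrix (Fin (mdim (Fintype.card F) R n))
              (Fin n × Fin ℓ) F × (Fin (mdim (Fintype.card F) R n) → F) =>
              AV.1.rank < n * ℓ - ddim (Fintype.card F) ℓ R δ n)).card
          = Fintype.card {AV : Matrix (Fin (mdim (Fintype.card F) R n)) (Fin n × Fin ℓ) F ×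
              (Fin (mdim (Fintype.card F) R n) → F) //
              AV.1.rank < n * ℓ - ddim (Fintype.card F) ℓ R δ n} :=
            (Fintype.card_subtype _).symm
        _ = Fintype.card ({A : Matrix (Fin (mdim (Fintype.card F) R n)) (Fin n × Fin ℓ) F //
              A.rank < n * ℓ - ddim (Fintype.card F) ℓ R δ n} ×
              (Fin (mdim (Fintype.card F) R n) → F)) :=
            Fintype.card_congr (Equiv.prodSubtypeFstEquivSubtypeProd (p := fun A : Matrix (Fin (mdim (Fintype.card F) R n)) (Fin n × Fin ℓ) F => A.rank < n * ℓ - ddim (Fintype.card F) ℓ R δ n))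
        _ = Fintype.card {A : Matrix (Fin (mdim (Fintype.card F) R n)) (Fin n × Fin ℓ) F //
              A.rank < n * ℓ - ddim (Fintype.card F) ℓ R δ n} *
              Fintype.card (Fin (mdim (Fintype.card F) R n) → F) := Fintype.card_prod _ _
        _ = _ := by rw [Fintype.card_subtype]
    -- base-2 versus base-q inequality
    have hf3 : δ * (n:ℝ) ≤ Real.logb 2 (Fintype.card F) * (ddim (Fintype.card F) ℓ R δ n : ℝ) := by
      have h1 : (n:ℝ) * δ / Real.logb 2 (Fintype.card F) ≤
          (n:ℝ) * ((ℓ:ℝ) * Real.logb 2 (Fintype.card F) - R + δ) /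
            Real.logb 2 (Fintype.card F) := by
        apply (div_le_div_iff_of_pos_right hL0).mpr
        have hn0 : (0:ℝ) ≤ (n:ℝ) := Nat.cast_nonneg n
        nlinarith
      have h2 := le_trans h1 (hu n)
      rw [div_le_iff₀ hL0] at h2
      nlinarith
    have h2q : (2:ℝ) ^ (δ * (n:ℝ)) ≤ (Fintype.card F : ℝ) ^ (ddim (Fintype.card F) ℓ R δ n) := by
      calc (2:ℝ) ^ (δ * (n:ℝ))
          ≤ (2:ℝ) ^ (Real.logb 2 (Fintype.card F) * (ddim (Fintype.card F) ℓ R δ n : ℝ)) :=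
            (Real.rpow_le_rpow_left_iff (by norm_num)).mpr hf3
        _ = ((2:ℝ) ^ Real.logb 2 (Fintype.card F)) ^ ((ddim (Fintype.card F) ℓ R δ n : ℕ) : ℝ) :=
            Real.rpow_mul (by norm_num) _ _
        _ = ((Fintype.card F : ℝ)) ^ ((ddim (Fintype.card F) ℓ R δ n : ℕ) : ℝ) := by
            rw [Real.rpow_logb (by norm_num) (by norm_num) hqpos]
        _ = ((Fintype.card F : ℝ)) ^ (ddim (Fintype.card F) ℓ R δ n) :=
            Real.rpow_natCast _ _
    have hqd0 : (0:ℝ) < (Fintype.card F : ℝ) ^ (ddim (Fintype.card F) ℓ R δ n) := by positivity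
    have hqinv : ((Fintype.card F : ℝ) ^ (ddim (Fintype.card F) ℓ R δ n))⁻¹ ≤
        (2:ℝ) ^ (-(δ * (n:ℝ))) := by
      rw [Real.rpow_neg (by norm_num)]
      exact inv_anti₀ (Real.rpow_pos_of_pos (by norm_num) _) h2q
    -- put everything together
    have hcardM0 : (0:ℝ) < (Fintype.card (Matrix (Fin (mdim (Fintype.card F) R n))
        (Fin n × Fin ℓ) F) : ℝ) := by exact_mod_cast Fintype.card_pos
    have hcardV0 : (0:ℝ) < (Fintype.card (Fin (mdim (Fintype.card F) R n) → F) : ℝ) := by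
      exact_mod_cast Fintype.card_pos
    have hmain : ((univ.filter (fun A : Matrix (Fin (mdim (Fintype.card F) R n))
          (Fin n × Fin ℓ) F => A.rank < n * ℓ - ddim (Fintype.card F) ℓ R δ n)).card : ℝ) ≤
        (2:ℝ) ^ (-(δ * (n:ℝ))) * (Fintype.card (Matrix (Fin (mdim (Fintype.card F) R n))
          (Fin n × Fin ℓ) F) : ℝ) := by
      have h8 : ((univ.filter (fun A : Matrix (Fin (mdim (Fintype.card F) R n))
            (Fin n × Fin ℓ) F => A.rank < n * ℓ - ddim (Fintype.card F) ℓ R δ n)).card : ℝ) *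
          (Fintype.card F : ℝ) ^ (ddim (Fintype.card F) ℓ R δ n) ≤
          (Fintype.card (Matrix (Fin (mdim (Fintype.card F) R n)) (Fin n × Fin ℓ) F) : ℝ) := by
        rw [hcardM]
        exact_mod_cast hcount
      calc ((univ.filter (fun A : Matrix (Fin (mdim (Fintype.card F) R n))
              (Fin n × Fin ℓ) F => A.rank < n * ℓ - ddim (Fintype.card F) ℓ R δ n)).card : ℝ)
          = (((univ.filter (fun A : Matrix (Fin (mdim (Fintype.card F) R n))
              (Fin n × Fin ℓ) F => A.rank < n * ℓ - ddim (Fintype.card F) ℓ R δ n)).card : ℝ) *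
              (Fintype.card F : ℝ) ^ (ddim (Fintype.card F) ℓ R δ n)) *
              ((Fintype.card F : ℝ) ^ (ddim (Fintype.card F) ℓ R δ n))⁻¹ := by
            rw [mul_assoc, mul_inv_cancel₀ hqd0.ne', mul_one]
        _ ≤ (Fintype.card (Matrix (Fin (mdim (Fintype.card F) R n)) (Fin n × Fin ℓ) F) : ℝ) *
              ((Fintype.card F : ℝ) ^ (ddim (Fintype.card F) ℓ R δ n))⁻¹ :=
            mul_le_mul_of_nonneg_right h8 (by positivity)
        _ ≤ (Fintype.card (Matrix (Fin (mdim (Fintype.card F) R n)) (Fin n × Fin ℓ) F) : ℝ) *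
              ((2:ℝ) ^ (-(δ * (n:ℝ)))) :=
            mul_le_mul_of_nonneg_left hqinv (le_of_lt hcardM0)
        _ = _ := mul_comm _ _
    rw [div_le_iff₀ (by exact_mod_cast Fintype.card_pos)]
    rw [hpair, Fintype.card_prod]
    push_cast
    calc ((univ.filter (fun A : Matrix (Fin (mdim (Fintype.card F) R n))
            (Fin n × Fin ℓ) F => A.rank < n * ℓ - ddim (Fintype.card F) ℓ R δ n)).card : ℝ) *
          (Fintype.card (Fin (mdim (Fintype.card F) R n) → F) : ℝ)
        ≤ ((2:ℝ) ^ (-(δ * (n:ℝ))) * (Fintype.card (Matrix (Fin (mdim (Fintype.card F) R n))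
            (Fin n × Fin ℓ) F) : ℝ)) * (Fintype.card (Fin (mdim (Fintype.card F) R n) → F) : ℝ) :=
          mul_le_mul_of_nonneg_right hmain (le_of_lt hcardV0)
      _ = (2:ℝ) ^ (-(δ * (n:ℝ))) * ((Fintype.card (Matrix (Fin (mdim (Fintype.card F) R n))
            (Fin n × Fin ℓ) F) : ℝ) * (Fintype.card (Fin (mdim (Fintype.card F) R n) → F) : ℝ)) := by
          ring
  · -- degenerate case : no bad event at all
    have hP : ∀ AV : Matrix (Fin (mdim (Fintype.card F) R n)) (Fin n × Fin ℓ) F ×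
        (Fin (mdim (Fintype.card F) R n) → F),
        ddim (Fintype.card F) ℓ R δ n < Module.finrank F (LinearMap.ker AV.1.mulVecLin) →
        False := by
      intro AV hcon
      have h1 := hrk n AV
      omega
    refine le_trans (hE n QNf (fun _ => False) hP h0) ?_
    rw [Finset.filter_false]
    simp only [Finset.card_empty, Nat.cast_zero, zero_div]
    exact le_of_lt hB0
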